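/- Let N be a first-order structure elementarily equivalent to an expansion M of (ℕ,<) in which F is an injective function from ℕ into a set Q, S is a binary relation on Q, and Th(M) records that every element a of Q has an eventual S-truth value along F (i.e., there are t ∈ {0,1} and n such that for all m > n, S(a,F(m))^t holds). Suppose ⟨a_α : α < κ⟩ is a <^N-increasing sequence cofinal in ℕ^N with κ an infinite cardinal, and suppose S has the independence property over the image of F in N. If the reduct N↾{Q,S} is λ-saturated and κ < λ, we reach a contradiction; hence ℕ^N has cofinality ≥ λ whenever N↾{Q,S} is λ-saturated. -/

import Mathlib

/- STATEMENT 2: Let N be (the ℕ-sort of) a structure elementarily equivalent to an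
expansion of (ℕ,<): N is a linear order with no maximum, carrying a set Q, a binary
relation S on Q and an injective map F : ℕ^N → Q such that (transferred from the
standard model) every a ∈ Q has an eventual S-truth value along F, while S has the
independence property over the image of F.  If the reduct N ↾ {Q,S} is λ-saturated,
then ℕ^N has cofinality ≥ λ.  (The proof: otherwise a cofinal sequence ⟨a_α : α<κ⟩,
κ < λ, yields the finitely satisfiable type
p(x) = {Q(x)} ∪ {S(x,F(a_{2α})) ∧ ¬S(x,F(a_{2α+1})) : α<κ} of size κ < λ, which
cannot be realized — a contradiction.) -/

open FirstOrder Cardinal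

universe u v w

/-- Realization of a formula in one free variable together with a tuple of
parameters. -/
def RealizesAt (L : FirstOrder.Language.{u, v}) (M : Type w) [L.Structure M] (x : M)
    (q : Σ n : ℕ, L.Formula (Fin 1 ⊕ Fin n) × (Fin n → M)) : Prop :=
  q.2.1.Realize (Sum.elim (fun _ => x) q.2.2)

/-- `M` is `λ`-saturated for `L`: every finitely satisfiable set of `L`-formulas in
one free variable with parameters from a subset of `M` of cardinality `< λ` is
realized in `M`. -/
def LSaturated (L : FirstOrder.Language.{u, v}) (M : Type w) [L.Structure M]
    (lam : Cardinal.{w}) : Prop :=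
  ∀ A : Set M, #A < lam →
    ∀ p : Set (Σ n : ℕ, L.Formula (Fin 1 ⊕ Fin n) × (Fin n → M)),
      (∀ q ∈ p, ∀ i, q.2.2 i ∈ A) →
      (∀ s : Finset (Σ n : ℕ, L.Formula (Fin 1 ⊕ Fin n) × (Fin n → M)),
        ↑s ⊆ p → ∃ x : M, ∀ q ∈ s, RealizesAt L M x q) →
      ∃ x : M, ∀ q ∈ p, RealizesAt L M x q

/-- The language with one unary relation `Q` and one binary relation `S`. -/
inductive QSRel : ℕ → Type
  | q : QSRel 1
  | s : QSRel 2

/-- The language {Q, S}. -/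
def LQS : FirstOrder.Language.{0, 0} :=
  ⟨fun _ => PEmpty, QSRel⟩

/-- The reduct of `N` to the language {Q, S}. -/
def QSStructure (N : Type w) (Q : Set N) (S : N → N → Prop) : LQS.Structure N where
  funMap := fun f _ => f.elim
  RelMap := fun r x =>
    match r with
    | .q => x 0 ∈ Q
    | .s => S (x 0) (x 1)

section AuxColoring
variable {N : Type w}

/-- Fuelled rank function for 2-coloring the graph of `g` restricted to `s`. -/
def fuelRank [DecidableEq N] (g : N → N) (s : Finset N) : ℕ → N → ℕ
  | 0, _ => 0
  | k+1, v => if v ∈ s then fuelRank g s k (g v) + 1 else 0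

lemma fuelRank_succ [DecidableEq N] (g : N → N) (s : Finset N) (k : ℕ) (v : N) :
    fuelRank g s (k+1) v = if v ∈ s then fuelRank g s k (g v) + 1 else 0 := rfl

lemma fuelRank_stable [LinearOrder N] (g : N → N) (hg : ∀ v, v < g v)
    (s : Finset N) : ∀ k (v : N), (s.filter (v ≤ ·)).card ≤ k →
      fuelRank g s (k+1) v = fuelRank g s k v := by
  intro k
  induction k with
  | zero =>
    intro v hv
    have hvs : v ∉ s := by
      intro hmem
      have : v ∈ s.filter (v ≤ ·) := Finset.mem_filter.2 ⟨hmem, le_refl v⟩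
      have := Finset.card_pos.2 ⟨v, this⟩
      omega
    simp [fuelRank, hvs]
  | succ k ih =>
    intro v hv
    by_cases hvs : v ∈ s
    · have hsub : s.filter (g v ≤ ·) ⊆ (s.filter (v ≤ ·)).erase v := by
        intro x hx
        rcases Finset.mem_filter.1 hx with ⟨hxs, hgx⟩
        refine Finset.mem_erase.2 ⟨?_, Finset.mem_filter.2 ⟨hxs, le_of_lt (lt_of_lt_of_le (hg v) hgx)⟩⟩
        intro h; subst h
        exact absurd (lt_of_lt_of_le (hg x) hgx) (lt_irrefl x)
      have hvmem : v ∈ s.filter (v ≤ ·) := Finset.mem_filter.2 ⟨hvs, le_refl v⟩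
      have hcard : (s.filter (g v ≤ ·)).card ≤ k := by
        have h1 := Finset.card_le_card hsub
        have h2 := Finset.card_erase_of_mem hvmem
        omega
      rw [fuelRank_succ g s (k+1) v, if_pos hvs, fuelRank_succ g s k v, if_pos hvs,
        ih (g v) hcard]
    · rw [fuelRank_succ g s (k+1) v, if_neg hvs, fuelRank_succ g s k v, if_neg hvs]

end AuxColoring

/-- "Q(x)" -/
def phiQ : LQS.Formula (Fin 1 ⊕ Fin 0) :=
  Language.Relations.formula₁ (L := LQS) QSRel.q (Language.Term.var (Sum.inl 0))

/-- "¬(S(x, y₀) ↔ S(x, y₁))" -/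
def phiS : LQS.Formula (Fin 1 ⊕ Fin 2) :=
  ((Language.Relations.formula₂ (L := LQS) QSRel.s (Language.Term.var (Sum.inl 0))
      (Language.Term.var (Sum.inr 0))).iff
    (Language.Relations.formula₂ (L := LQS) QSRel.s (Language.Term.var (Sum.inl 0))
      (Language.Term.var (Sum.inr 1)))).not

lemma realizesAt_phiQ {N : Type w} (Q : Set N) (S : N → N → Prop) (x : N) (v : Fin 0 → N) :
    @RealizesAt LQS N (QSStructure N Q S) x ⟨0, phiQ, v⟩ ↔ x ∈ Q := by
  letI := QSStructure N Q S
  simp only [RealizesAt, phiQ, Language.Formula.realize_rel₁, Language.Term.realize_var]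
  rfl

lemma realizesAt_phiS {N : Type w} (Q : Set N) (S : N → N → Prop) (x : N) (v : Fin 2 → N) :
    @RealizesAt LQS N (QSStructure N Q S) x ⟨2, phiS, v⟩ ↔ ¬ (S x (v 0) ↔ S x (v 1)) := by
  letI := QSStructure N Q S
  simp only [RealizesAt, phiS, Language.Formula.realize_not, Language.Formula.realize_iff,
    Language.Formula.realize_rel₂, Language.Term.realize_var]
  rfl

theorem stmt_2 {N : Type w} [LinearOrder N] [NoMaxOrder N] [Nonempty N]
    (Q : Set N) (S : N → N → Prop) (F : N → N)
    (hFinj : Function.Injective F) (hFQ : ∀ n : N, F n ∈ Q)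
    (hev : ∀ a ∈ Q, ∃ (t : Bool) (n : N), ∀ m : N, n < m → (S a (F m) ↔ t = true))
    (hIP : ∀ s t : Finset N, Disjoint s t →
      ∃ x ∈ Q, (∀ n ∈ s, S x (F n)) ∧ ∀ n ∈ t, ¬ S x (F n))
    (lam : Cardinal.{w})
    (hsat : @LSaturated LQS N (QSStructure N Q S) lam) :
    lam ≤ Order.cof N := by
  classical
  rw [Order.le_cof_iff]
  intro C hC
  by_contra hlt
  push_neg at hlt
  -- choose g with g v ∈ C and v < g v
  have hg' : ∀ v : N, ∃ b, b ∈ C ∧ v < b := by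
    intro v
    obtain ⟨u, hu⟩ := exists_gt v
    obtain ⟨b, hb, hub⟩ := hC u
    exact ⟨b, hb, lt_of_lt_of_le hu hub⟩
  choose g hgC hglt using hg'
  -- C is infinite
  have hCinf : C.Infinite := by
    intro hfin
    have hne : hfin.toFinset.Nonempty := by
      obtain ⟨b, hb, _⟩ := hC (Classical.arbitrary N)
      exact ⟨b, hfin.mem_toFinset.2 hb⟩
    set m := hfin.toFinset.max' hne with hm
    obtain ⟨u, hu⟩ := exists_gt m
    obtain ⟨b, hb, hub⟩ := hC u
    have : b ≤ m := hfin.toFinset.le_max' b (hfin.mem_toFinset.2 hb)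
    exact absurd (lt_of_lt_of_le hu (le_trans hub this)) (lt_irrefl m)
  have hCcard : ℵ₀ ≤ #C := Cardinal.infinite_iff.1 hCinf.to_subtype
  letI st := QSStructure N Q S
  -- the type p
  set pfun : N → (Σ n : ℕ, LQS.Formula (Fin 1 ⊕ Fin n) × (Fin n → N)) :=
    fun c => ⟨2, phiS, ![F c, F (g c)]⟩ with hpfun
  set qQ : (Σ n : ℕ, LQS.Formula (Fin 1 ⊕ Fin n) × (Fin n → N)) :=
    ⟨0, phiQ, fun i => i.elim0⟩ with hqQ
  set p : Set (Σ n : ℕ, LQS.Formula (Fin 1 ⊕ Fin n) × (Fin n → N)) :=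
    insert qQ (pfun '' C) with hp
  set A : Set N := F '' (C ∪ g '' C) with hA
  have hAcard : #A < lam := by
    calc #A ≤ #(↥(C ∪ g '' C)) := Cardinal.mk_image_le
      _ ≤ #C + #(↥(g '' C)) := Cardinal.mk_union_le _ _
      _ ≤ #C + #C := add_le_add le_rfl Cardinal.mk_image_le
      _ = #C := Cardinal.add_eq_self hCcard
      _ < lam := hlt
  have hparams : ∀ q ∈ p, ∀ i, q.2.2 i ∈ A := by
    rintro q hq i
    rcases hq with hq | ⟨c, hc, rfl⟩
    · subst hq; exact i.elim0
    · fin_cases i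
      · exact ⟨c, Or.inl hc, rfl⟩
      · exact ⟨g c, Or.inr ⟨c, hc, rfl⟩, rfl⟩
  -- finite satisfiability
  have hfinsat : ∀ s : Finset (Σ n : ℕ, LQS.Formula (Fin 1 ⊕ Fin n) × (Fin n → N)),
      ↑s ⊆ p → ∃ x : N, ∀ q ∈ s, @RealizesAt LQS N st x q := by
    intro s hs
    have hpfuninj : Function.Injective pfun := by
      intro a b hab
      simp only [hpfun] at hab
      obtain ⟨-, h2⟩ := Sigma.mk.inj_iff.1 hab
      have h3 := eq_of_heq h2
      have h0 : F a = F b := congrFun (congrArg Prod.snd h3) 0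
      exact hFinj h0
    have hTfin : {c | c ∈ C ∧ pfun c ∈ s}.Finite := by
      apply Set.Finite.subset (s.finite_toSet.preimage hpfuninj.injOn)
      intro c hc; exact hc.2
    set s₀ : Finset N := hTfin.toFinset with hs₀
    set K : ℕ := s₀.card with hK
    set f : N → ℕ := fuelRank g s₀ (K+1) with hf
    have hstab : ∀ v : N, fuelRank g s₀ (K+1) v = fuelRank g s₀ K v := by
      intro v
      exact fuelRank_stable g hglt s₀ K v (le_trans (Finset.card_filter_le _ _) le_rfl)
    have hkey : ∀ c ∈ s₀, f c = f (g c) + 1 := by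
      intro c hc
      have h1 : fuelRank g s₀ (K+1) c = fuelRank g s₀ K (g c) + 1 := by
        rw [fuelRank_succ, if_pos hc]
      rw [hf, h1, ← hstab (g c)]
    set T' : Finset N := s₀ ∪ s₀.image g with hT'
    set sT : Finset N := T'.filter (fun v => Even (f v)) with hsT
    set sF : Finset N := T'.filter (fun v => ¬ Even (f v)) with hsF
    have hdisj : Disjoint sT sF := by
      rw [Finset.disjoint_left]
      intro a ha hb
      exact (Finset.mem_filter.1 hb).2 (Finset.mem_filter.1 ha).2
    obtain ⟨x, hxQ, hxT, hxF⟩ := hIP sT sF hdisj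
    refine ⟨x, ?_⟩
    intro q hq
    rcases hs hq with hq' | ⟨c, hcC, rfl⟩
    · subst hq'
      exact (realizesAt_phiQ Q S x _).2 hxQ
    · have hcs₀ : c ∈ s₀ := hTfin.mem_toFinset.2 ⟨hcC, hq⟩
      have hcT' : c ∈ T' := Finset.mem_union_left _ hcs₀
      have hgcT' : g c ∈ T' := Finset.mem_union_right _ (Finset.mem_image_of_mem g hcs₀)
      have hpar : Even (f c) ↔ ¬ Even (f (g c)) := by
        rw [hkey c hcs₀, Nat.even_add_one]
      refine (realizesAt_phiS Q S x ![F c, F (g c)]).2 ?_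
      simp only [Matrix.cons_val_zero, Matrix.cons_val_one, Matrix.head_cons]
      by_cases hev' : Even (f c)
      · have h1 : S x (F c) := hxT c (Finset.mem_filter.2 ⟨hcT', hev'⟩)
        have h2 : ¬ S x (F (g c)) := hxF (g c) (Finset.mem_filter.2 ⟨hgcT', hpar.1 hev'⟩)
        tauto
      · have h1 : ¬ S x (F c) := hxF c (Finset.mem_filter.2 ⟨hcT', hev'⟩)
        have h2 : S x (F (g c)) := hxT (g c)
          (Finset.mem_filter.2 ⟨hgcT', not_not.1 (fun h => hev' (hpar.2 h))⟩)
        tauto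
  obtain ⟨x, hx⟩ := hsat A hAcard p hparams hfinsat
  have hxQ : x ∈ Q := (realizesAt_phiQ Q S x _).1 (hx qQ (Set.mem_insert _ _))
  obtain ⟨t, n, hn⟩ := hev x hxQ
  have hq : pfun (g n) ∈ p := Set.mem_insert_of_mem _ ⟨g n, hgC n, rfl⟩
  have := (realizesAt_phiS Q S x ![F (g n), F (g (g n))]).1 (hx _ hq)
  simp only [Matrix.cons_val_zero, Matrix.cons_val_one, Matrix.head_cons] at this
  exact this ((hn (g n) (hglt n)).trans (hn (g (g n)) (lt_trans (hglt n) (hglt (g n)))).symm)
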